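/- Let H be obtained from a tree by attaching some loops, and suppose H has at least three leaves. Then for any given leaf u of H, there exists a path in H containing two different leaves of H, containing at most one branch vertex of H, and avoiding u. -/

import Mathlib

structure LoopGraph (V : Type) [Fintype V] [DecidableEq V] where
  N : V → Finset V
  symm : ∀ u v, u ∈ N v ↔ v ∈ N u

namespace LoopGraph

variable {V : Type} [Fintype V] [DecidableEq V]

/-- Indicator vector of a finite set of vertices, as a configuration over `F_2`. -/
def chi (S : Finset V) : V → ZMod 2 := fun u => if u ∈ S then 1 else 0

/-- One regular move of the sigma-game. -/
def RegStep (G : LoopGraph V) (x y : V → ZMod 2) : Prop :=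
  ∃ v, y = x + chi (G.N v)

/-- One valid move of the lit-only sigma-game. -/
def ValidStep (G : LoopGraph V) (x y : V → ZMod 2) : Prop :=
  ∃ v, x v = 1 ∧ y = x + chi (G.N v)

def RegReach (G : LoopGraph V) : (V → ZMod 2) → (V → ZMod 2) → Prop :=
  Relation.ReflTransGen G.RegStep

def ValidReach (G : LoopGraph V) : (V → ZMod 2) → (V → ZMod 2) → Prop :=
  Relation.ReflTransGen G.ValidStep

/-- The light number of a configuration. -/
def L (x : V → ZMod 2) : ℕ := (Finset.univ.filter fun v => x v = 1).card

/-- Minimum light number of a configuration for the sigma-game. -/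
noncomputable def ML (G : LoopGraph V) (x : V → ZMod 2) : ℕ :=
  sInf (L '' {y | G.RegReach x y})

/-- Minimum light number of a configuration for the lit-only sigma-game. -/
noncomputable def MLs (G : LoopGraph V) (x : V → ZMod 2) : ℕ :=
  sInf (L '' {y | G.ValidReach x y})

/-- Minimum light number of the sigma-game on `G`. -/
noncomputable def MLmax (G : LoopGraph V) : ℕ := ⨆ x, G.ML x

/-- Minimum light number of the lit-only sigma-game on `G`. -/
noncomputable def MLsmax (G : LoopGraph V) : ℕ := ⨆ x, G.MLs x

/-- Non-loop adjacency. -/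
def Adj (G : LoopGraph V) (u w : V) : Prop := u ≠ w ∧ w ∈ G.N u

def Connected (G : LoopGraph V) : Prop :=
  ∀ u w : V, Relation.ReflTransGen G.Adj u w

/-- Degree, counting non-loop edges only. -/
def deg (G : LoopGraph V) (v : V) : ℕ := ((G.N v).erase v).card

/-- Underlying simple graph (loops discarded). -/
def simple (G : LoopGraph V) : SimpleGraph V where
  Adj := G.Adj
  symm := by
    constructor
    intro u w h
    exact ⟨h.1.symm, (G.symm w u).mp h.2⟩
  loopless := by constructor; intro u h; exact h.1 rfl

/-- Induced subgraph on a finite vertex subset. -/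
def induce (G : LoopGraph V) (T : Finset V) : LoopGraph {u // u ∈ T} where
  N u := Finset.univ.filter fun w => w.val ∈ G.N u.val
  symm := by
    intro u w
    simp only [Finset.mem_filter, Finset.mem_univ, true_and]
    exact G.symm u.1 w.1

end LoopGraph

section TreeHelpers

open SimpleGraph

variable {V : Type} [Fintype V] [DecidableEq V] {T : SimpleGraph V}

lemma tree_path_unique (hT : T.IsAcyclic) {x y : V} (p q : T.Walk x y)
    (hp : p.IsPath) (hq : q.IsPath) : p = q := by
  have h := (SimpleGraph.isAcyclic_iff_path_unique.mp hT)
    (⟨p, hp⟩ : T.Path x y) (⟨q, hq⟩ : T.Path x y)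
  exact congrArg Subtype.val h

lemma tree_length_eq_dist (hT : T.IsTree) {x y : V} (p : T.Walk x y) (hp : p.IsPath) :
    p.length = T.dist x y := by
  obtain ⟨p0, hp0, hl⟩ := hT.isConnected.exists_path_of_dist x y
  rw [tree_path_unique hT.IsAcyclic p p0 hp hp0, hl]

lemma dist_le_of_mem_support {x y z : V} (p : T.Walk x z) (hy : y ∈ p.support) :
    T.dist x y ≤ p.length :=
  le_trans (SimpleGraph.dist_le (p.takeUntil y hy)) (p.length_takeUntil_le hy)

lemma tree_parent (hT : T.IsTree) {u x : V} (hx : x ≠ u) :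
    ∃ y, T.Adj x y ∧ T.dist u y + 1 = T.dist u x := by
  obtain ⟨p, hp, hl⟩ := hT.isConnected.exists_path_of_dist u x
  have hpos : 0 < T.dist u x := hT.isConnected.pos_dist_of_ne (fun h => hx h.symm)
  have hrev : ¬ p.reverse.Nil := by
    rw [Walk.not_nil_iff_lt_length, Walk.length_reverse, hl]
    exact hpos
  obtain ⟨y, hadj, q, hq⟩ := Walk.not_nil_iff.mp hrev
  have hqpath : q.IsPath := by
    have h1 : p.reverse.IsPath := hp.reverse
    rw [hq] at h1
    exact h1.of_cons
  refine ⟨y, hadj, ?_⟩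
  have hlen : q.length + 1 = T.dist u x := by
    have h2 := congrArg Walk.length hq
    rw [Walk.length_reverse, hl, Walk.length_cons] at h2
    omega
  have h3 : q.reverse.length = T.dist u y := tree_length_eq_dist hT q.reverse hqpath.reverse
  rw [Walk.length_reverse] at h3
  omega

lemma tree_parent_unique (hT : T.IsTree) {u x y₁ y₂ : V}
    (h1 : T.Adj x y₁) (h2 : T.Adj x y₂)
    (hd1 : T.dist u y₁ + 1 = T.dist u x) (hd2 : T.dist u y₂ + 1 = T.dist u x) :
    y₁ = y₂ := by
  obtain ⟨r₁, hr₁, hl₁⟩ := hT.isConnected.exists_path_of_dist u y₁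
  obtain ⟨r₂, hr₂, hl₂⟩ := hT.isConnected.exists_path_of_dist u y₂
  have hx1 : x ∉ r₁.reverse.support := by
    rw [Walk.support_reverse, List.mem_reverse]
    intro hmem
    have := dist_le_of_mem_support r₁ hmem
    omega
  have hx2 : x ∉ r₂.reverse.support := by
    rw [Walk.support_reverse, List.mem_reverse]
    intro hmem
    have := dist_le_of_mem_support r₂ hmem
    omega
  have hs₁ : (Walk.cons h1 r₁.reverse).IsPath := hr₁.reverse.cons hx1
  have hs₂ : (Walk.cons h2 r₂.reverse).IsPath := hr₂.reverse.cons hx2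
  have heq := tree_path_unique hT.IsAcyclic _ _ hs₁ hs₂
  have hv := congrArg (fun w => Walk.getVert w 1) heq
  simpa [Walk.getVert_cons_succ, Walk.getVert_zero] using hv

lemma tree_adj_dist (hT : T.IsTree) {u x y : V} (h : T.Adj x y) :
    T.dist u y = T.dist u x + 1 ∨ T.dist u y + 1 = T.dist u x := by
  obtain ⟨p, hp, hl⟩ := hT.isConnected.exists_path_of_dist u x
  by_cases hy : y ∈ p.support
  · right
    have ht : (p.takeUntil y hy).IsPath := hp.takeUntil hy
    have hdy : (p.takeUntil y hy).length = T.dist u y := tree_length_eq_dist hT _ ht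
    have hlen : (p.takeUntil y hy).length + (p.dropUntil y hy).length = T.dist u x := by
      have h2 := congrArg Walk.length (p.take_spec hy)
      rwa [Walk.length_append, hl] at h2
    have hne : (p.dropUntil y hy).length ≠ 0 := by
      intro h0
      exact h.ne' (Walk.eq_of_length_eq_zero h0)
    have hyx : T.dist y x = 1 := by
      rw [SimpleGraph.dist_eq_one_iff_adj]; exact h.symm
    have htri : T.dist u x ≤ T.dist u y + T.dist y x := hT.isConnected.dist_triangle
    omega
  · left
    have hy' : y ∉ p.reverse.support := by
      rw [Walk.support_reverse, List.mem_reverse]; exact hy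
    have hq : (Walk.cons h.symm p.reverse).IsPath := hp.reverse.cons hy'
    have h3 := tree_length_eq_dist hT _ hq
    rw [Walk.length_cons, Walk.length_reverse, hl] at h3
    rw [SimpleGraph.dist_comm]
    omega

lemma getVert_one_takeUntil {x y z : V} (p : T.Walk x y) (hz : z ∈ p.support) (hne : z ≠ x) :
    (p.takeUntil z hz).getVert 1 = p.getVert 1 := by
  have hlen : (p.takeUntil z hz).length ≠ 0 := by
    intro h0
    exact hne (Walk.eq_of_length_eq_zero h0).symm
  have hv := congrArg (fun w => Walk.getVert w 1) (p.take_spec hz)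
  simp only [Walk.getVert_append] at hv
  by_cases hc : 1 < (p.takeUntil z hz).length
  · rw [if_pos hc] at hv; exact hv
  · have hl1 : (p.takeUntil z hz).length = 1 := by omega
    rw [if_neg hc, hl1, Nat.sub_self, Walk.getVert_zero] at hv
    have h2 : (p.takeUntil z hz).getVert 1 = z := by
      have := Walk.getVert_length (p.takeUntil z hz)
      rwa [hl1] at this
    rw [h2, hv]

end TreeHelpers

open LoopGraph in
theorem tree_path_through_two_leaves_avoiding_a_leaf
    {V : Type} [Fintype V] [DecidableEq V] (G : LoopGraph V)
    (htree : G.simple.IsTree)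
    (hleaves : 3 ≤ (Finset.univ.filter fun v => G.deg v = 1).card)
    (u : V) (hu : G.deg u = 1) :
    ∃ (a b : V) (p : G.simple.Walk a b), p.IsPath ∧ a ≠ b ∧
      G.deg a = 1 ∧ G.deg b = 1 ∧
      (p.support.toFinset.filter fun v => 3 ≤ G.deg v).card ≤ 1 ∧
      u ∉ p.support := by
  haveI hdec : DecidableRel G.simple.Adj := fun a b =>
    inferInstanceAs (Decidable (a ≠ b ∧ b ∈ G.N a))
  have deg_eq : ∀ x, G.deg x = G.simple.degree x := by
    intro x
    show ((G.N x).erase x).card = (G.simple.neighborFinset x).card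
    congr 1
    ext w
    rw [Finset.mem_erase, SimpleGraph.mem_neighborFinset]
    constructor
    · rintro ⟨h1, h2⟩; exact ⟨h1.symm, h2⟩
    · rintro ⟨h1, h2⟩; exact ⟨h1.symm, h2⟩
  have hconn := htree.isConnected
  -- there is a branch vertex
  haveI : Nonempty V := ⟨u⟩
  have hsum : ∑ x, G.simple.degree x = 2 * G.simple.edgeFinset.card :=
    SimpleGraph.sum_degrees_eq_twice_card_edges _
  have hE : G.simple.edgeFinset.card + 1 = Fintype.card V := htree.card_edgeFinset
  have hBne : (Finset.univ.filter fun x => 3 ≤ G.deg x).Nonempty := by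
    by_contra hB
    have hdeg2 : ∀ x, G.deg x ≤ 2 := by
      intro x
      by_contra hx
      exact hB ⟨x, Finset.mem_filter.mpr ⟨Finset.mem_univ x, by omega⟩⟩
    have key : ∑ x : V, (G.deg x + if G.deg x = 1 then 1 else 0) ≤ ∑ _x : V, 2 := by
      apply Finset.sum_le_sum
      intro i _
      have := hdeg2 i
      split <;> omega
    rw [Finset.sum_add_distrib] at key
    have h1 : ∑ x : V, G.deg x = 2 * G.simple.edgeFinset.card := by
      rw [← hsum]; exact Finset.sum_congr rfl (fun x _ => deg_eq x)
    have h2 : ∑ _x : V, 2 = 2 * Fintype.card V := by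
      rw [Finset.sum_const, Finset.card_univ, smul_eq_mul, Nat.mul_comm]
    have h3 : (Finset.univ.filter fun v => G.deg v = 1).card
        = ∑ x : V, (if G.deg x = 1 then 1 else 0) :=
      Finset.card_filter _ _
    omega
  obtain ⟨v, hvB, hmaxmem⟩ :=
    Finset.exists_max_image _ (fun x => G.simple.dist u x) hBne
  have hv3 : 3 ≤ G.deg v := (Finset.mem_filter.mp hvB).2
  have hmax : ∀ x, 3 ≤ G.deg x → G.simple.dist u x ≤ G.simple.dist u v := fun x hx =>
    hmaxmem x (Finset.mem_filter.mpr ⟨Finset.mem_univ x, hx⟩)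
  set d := G.simple.dist u v with hd
  have hvu : v ≠ u := by
    intro h; rw [h, hu] at hv3; omega
  have hd1 : 1 ≤ d := hconn.pos_dist_of_ne (fun h => hvu h.symm)
  obtain ⟨y0, hy0adj, hy0⟩ := tree_parent htree hvu
  -- two children of v
  have hy0mem : y0 ∈ G.simple.neighborFinset v := (SimpleGraph.mem_neighborFinset _ _ _).mpr hy0adj
  have hcardN : (G.simple.neighborFinset v).card = G.deg v := (deg_eq v).symm
  have hcard : 1 < ((G.simple.neighborFinset v).erase y0).card := by
    rw [Finset.card_erase_of_mem hy0mem, hcardN]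
    omega
  obtain ⟨w1, hw1, w2, hw2, hww⟩ := Finset.one_lt_card.mp hcard
  have hchild : ∀ w ∈ (G.simple.neighborFinset v).erase y0, G.simple.dist u w = d + 1 := by
    intro w hw
    obtain ⟨hne, hmem⟩ := Finset.mem_erase.mp hw
    have hadj : G.simple.Adj v w := (SimpleGraph.mem_neighborFinset _ _ _).mp hmem
    rcases tree_adj_dist htree (u := u) hadj with h | h
    · exact h
    · exact absurd (tree_parent_unique htree hadj hy0adj h hy0) hne
  have hw1adj : G.simple.Adj v w1 := (SimpleGraph.mem_neighborFinset _ _ _).mp (Finset.mem_erase.mp hw1).2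
  have hw2adj : G.simple.Adj v w2 := (SimpleGraph.mem_neighborFinset _ _ _).mp (Finset.mem_erase.mp hw2).2
  have hw1d : G.simple.dist u w1 = d + 1 := hchild w1 hw1
  have hw2d : G.simple.dist u w2 = d + 1 := hchild w2 hw2
  -- descend from a deep vertex to a leaf
  have descend : ∀ (fuel : ℕ) (w : V), Fintype.card V ≤ fuel + G.simple.dist u w →
      d + 1 ≤ G.simple.dist u w →
      ∃ (a : V) (q : G.simple.Walk w a), q.IsPath ∧ G.deg a = 1 ∧
        ∀ x ∈ q.support, G.simple.dist u w ≤ G.simple.dist u x := by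
    intro fuel
    induction fuel with
    | zero =>
      intro w hfuel hdw
      exfalso
      obtain ⟨p, hp, hl⟩ := hconn.exists_path_of_dist u w
      have := hp.length_lt
      omega
    | succ n ih =>
      intro w hfuel hdw
      by_cases hw1' : G.deg w = 1
      · refine ⟨w, SimpleGraph.Walk.nil, SimpleGraph.Walk.IsPath.nil, hw1', ?_⟩
        intro x hx
        rw [SimpleGraph.Walk.support_nil, List.mem_singleton] at hx
        rw [hx]
      · have hwu : w ≠ u := by
          intro h; rw [h, SimpleGraph.dist_self] at hdw; omega
        obtain ⟨y, hyadj, hydist⟩ := tree_parent htree hwu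
        have hdeg2 : G.deg w ≤ 2 := by
          by_contra h
          have := hmax w (by omega)
          omega
        have hdegw : 1 < (G.simple.neighborFinset w).card := by
          have hcw : (G.simple.neighborFinset w).card = G.deg w := (deg_eq w).symm
          have hpos : 0 < (G.simple.neighborFinset w).card :=
            Finset.card_pos.mpr ⟨y, (SimpleGraph.mem_neighborFinset _ _ _).mpr hyadj⟩
          omega
        obtain ⟨w', hw'mem, hw'ne⟩ := Finset.exists_mem_ne hdegw y
        have hw'adj : G.simple.Adj w w' := (SimpleGraph.mem_neighborFinset _ _ _).mp hw'mem
        have hw'dist : G.simple.dist u w' = G.simple.dist u w + 1 := by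
          rcases tree_adj_dist htree (u := u) hw'adj with h | h
          · exact h
          · exact absurd (tree_parent_unique htree hw'adj hyadj h hydist) hw'ne
        obtain ⟨a, q', hq', ha, hsup⟩ := ih w' (by omega) (by omega)
        refine ⟨a, SimpleGraph.Walk.cons hw'adj q', hq'.cons ?_, ha, ?_⟩
        · intro hmem
          have := hsup w hmem
          omega
        · intro x hx
          rw [SimpleGraph.Walk.support_cons, List.mem_cons] at hx
          rcases hx with rfl | hx
          · exact le_refl _
          · have := hsup x hx; omega
  obtain ⟨a, q1, hq1, ha, hs1⟩ := descend (Fintype.card V) w1 (by omega) (by omega)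
  obtain ⟨b, q2, hq2, hb, hs2⟩ := descend (Fintype.card V) w2 (by omega) (by omega)
  have hs1' : ∀ x ∈ q1.support, d + 1 ≤ G.simple.dist u x := fun x hx => by
    have := hs1 x hx; omega
  have hs2' : ∀ x ∈ q2.support, d + 1 ≤ G.simple.dist u x := fun x hx => by
    have := hs2 x hx; omega
  have hvq1 : v ∉ q1.support := fun h => by have := hs1' v h; omega
  have hvq2 : v ∉ q2.support := fun h => by have := hs2' v h; omega
  have hp1 : (SimpleGraph.Walk.cons hw1adj q1).IsPath := hq1.cons hvq1
  have hp2 : (SimpleGraph.Walk.cons hw2adj q2).IsPath := hq2.cons hvq2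
  -- the two descending paths are disjoint
  have hdisj : ∀ x, x ∈ q1.support → x ∈ q2.support → False := by
    intro x h1 h2
    have hxv : x ≠ v := fun h => hvq1 (h ▸ h1)
    have hx1 : x ∈ (SimpleGraph.Walk.cons hw1adj q1).support := by
      rw [SimpleGraph.Walk.support_cons]; exact List.mem_cons_of_mem _ h1
    have hx2 : x ∈ (SimpleGraph.Walk.cons hw2adj q2).support := by
      rw [SimpleGraph.Walk.support_cons]; exact List.mem_cons_of_mem _ h2
    have ht1 : ((SimpleGraph.Walk.cons hw1adj q1).takeUntil x hx1).IsPath := hp1.takeUntil hx1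
    have ht2 : ((SimpleGraph.Walk.cons hw2adj q2).takeUntil x hx2).IsPath := hp2.takeUntil hx2
    have heq := tree_path_unique htree.IsAcyclic _ _ ht1 ht2
    have hg1 : ((SimpleGraph.Walk.cons hw1adj q1).takeUntil x hx1).getVert 1 = w1 := by
      rw [getVert_one_takeUntil _ hx1 hxv, SimpleGraph.Walk.getVert_cons_succ, SimpleGraph.Walk.getVert_zero]
    have hg2 : ((SimpleGraph.Walk.cons hw2adj q2).takeUntil x hx2).getVert 1 = w2 := by
      rw [getVert_one_takeUntil _ hx2 hxv, SimpleGraph.Walk.getVert_cons_succ, SimpleGraph.Walk.getVert_zero]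
    rw [heq, hg2] at hg1
    exact hww hg1.symm
  -- assemble the path
  refine ⟨a, b,
    ((SimpleGraph.Walk.cons hw1adj q1).reverse.append (SimpleGraph.Walk.cons hw2adj q2)),
    ?_, ?_, ha, hb, ?_, ?_⟩
  · rw [SimpleGraph.Walk.isPath_def, SimpleGraph.Walk.support_append,
      SimpleGraph.Walk.support_reverse, SimpleGraph.Walk.support_cons,
      SimpleGraph.Walk.support_cons, List.tail_cons, List.nodup_append]
    refine ⟨List.nodup_reverse.mpr (SimpleGraph.Walk.isPath_def _ |>.mp hp1), ?_, ?_⟩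
    · exact SimpleGraph.Walk.isPath_def _ |>.mp hq2
    · intro x hxl y hxr hxy
      subst hxy
      rw [List.mem_reverse, List.mem_cons] at hxl
      rcases hxl with rfl | hxl
      · exact hvq2 hxr
      · exact hdisj x hxl hxr
  · intro hab
    exact hdisj a q1.end_mem_support (hab ▸ q2.end_mem_support)
  · have hsubset : ((((SimpleGraph.Walk.cons hw1adj q1).reverse.append
        (SimpleGraph.Walk.cons hw2adj q2)).support.toFinset.filter
          fun x => 3 ≤ G.deg x)) ⊆ {v} := by
      intro x hx
      obtain ⟨hxs, hx3⟩ := Finset.mem_filter.mp hx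
      rw [List.mem_toFinset, SimpleGraph.Walk.mem_support_append_iff,
        SimpleGraph.Walk.support_reverse, List.mem_reverse,
        SimpleGraph.Walk.support_cons, SimpleGraph.Walk.support_cons,
        List.mem_cons, List.mem_cons] at hxs
      have hxd := hmax x hx3
      rcases hxs with (rfl | hxs) | (rfl | hxs)
      · exact Finset.mem_singleton_self _
      · have := hs1' x hxs; omega
      · exact Finset.mem_singleton_self _
      · have := hs2' x hxs; omega
    calc _ ≤ ({v} : Finset V).card := Finset.card_le_card hsubset
      _ = 1 := Finset.card_singleton v
  · intro hus
    rw [SimpleGraph.Walk.mem_support_append_iff,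
      SimpleGraph.Walk.support_reverse, List.mem_reverse,
      SimpleGraph.Walk.support_cons, SimpleGraph.Walk.support_cons,
      List.mem_cons, List.mem_cons] at hus
    have hud : G.simple.dist u u = 0 := SimpleGraph.dist_self
    rcases hus with (h | h) | (h | h)
    · exact hvu (h.symm)
    · have := hs1' u h; omega
    · exact hvu (h.symm)
    · have := hs2' u h; omega
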